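/- arXiv:2501.09447 — 2 statements merged into one kernel-verified Lean document; each statement's English description precedes it below -/
import Mathlib

section
/- Let A be an Iwanaga-Gorenstein finite dimensional algebra over a field K. Then every simple right A-module S has finite grade, i.e. there exists some i ≥ 0 with Ext_A^i(S, A) ≠ 0. -/
/-! ## Basic homological algebra infrastructure for (right) modules over a ring -/

universe u

section Core

variable (B : Type u) [Ring B]

/-- A projective resolution `⋯ → P 1 → P 0 → M → 0` of a module `M`. -/
structure ProjRes (M : Type u) [AddCommGroup M] [Module B M] where
  P : ℕ → Type u
  [acg : ∀ n, AddCommGroup (P n)]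
  [mod : ∀ n, Module B (P n)]
  proj : ∀ n, Module.Projective B (P n)
  d : (n : ℕ) → P (n + 1) →ₗ[B] P n
  π : P 0 →ₗ[B] M
  surj : Function.Surjective π
  exact_at_zero : Function.Exact (d 0) π
  exact : ∀ n, Function.Exact (d (n + 1)) (d n)

attribute [instance] ProjRes.acg ProjRes.mod

/-- An injective coresolution `0 → M → I 0 → I 1 → ⋯` of a module `M`. -/
structure InjCores (M : Type u) [AddCommGroup M] [Module B M] where
  I : ℕ → Type u
  [acg : ∀ n, AddCommGroup (I n)]
  [mod : ∀ n, Module B (I n)]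
  inj : ∀ n, Module.Injective B (I n)
  ι : M →ₗ[B] I 0
  d : (n : ℕ) → I n →ₗ[B] I (n + 1)
  mono : Function.Injective ι
  exact_at_zero : Function.Exact ι (d 0)
  exact : ∀ n, Function.Exact (d n) (d (n + 1))

attribute [instance] InjCores.acg InjCores.mod

variable {B}

/-- A submodule `N ≤ M` is essential if it intersects every nonzero submodule
nontrivially. -/
def IsEssentialSub {M : Type u} [AddCommGroup M] [Module B M] (N : Submodule B M) : Prop :=
  ∀ L : Submodule B M, L ≠ ⊥ → N ⊓ L ≠ ⊥

/-- A submodule `N ≤ M` is superfluous if `N ⊔ L = ⊤` forces `L = ⊤`. -/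
def IsSuperfluousSub {M : Type u} [AddCommGroup M] [Module B M] (N : Submodule B M) : Prop :=
  ∀ L : Submodule B M, N ⊔ L = ⊤ → L = ⊤

variable (B)

/-- A minimal injective coresolution: an injective coresolution in which the image of each
map into `I n` is an essential submodule of `I n`. -/
structure MinInjCores (M : Type u) [AddCommGroup M] [Module B M] extends InjCores B M where
  essential_at_zero : IsEssentialSub (LinearMap.range ι)
  essential : ∀ n, IsEssentialSub (LinearMap.range (d n))

/-- A minimal projective resolution: a projective resolution in which all the kernels
are superfluous submodules. -/
structure MinProjRes (M : Type u) [AddCommGroup M] [Module B M] extends ProjRes B M where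
  superfluous_at_zero : IsSuperfluousSub (LinearMap.ker π)
  superfluous : ∀ n, IsSuperfluousSub (LinearMap.ker (d n))

/-- The projective dimension of a module, defined as the infimum (in `ℕ∞`) of the lengths
of projective resolutions of the module. -/
noncomputable def pdim (M : Type u) [AddCommGroup M] [Module B M] : ℕ∞ :=
  sInf ((fun n : ℕ => (n : ℕ∞)) ''
    {n | ∃ R : ProjRes B M, ∀ i, n < i → Subsingleton (R.P i)})

/-- The injective dimension of a module, defined as the infimum (in `ℕ∞`) of the lengths
of injective coresolutions of the module. -/
noncomputable def idim (M : Type u) [AddCommGroup M] [Module B M] : ℕ∞ :=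
  sInf ((fun n : ℕ => (n : ℕ∞)) ''
    {n | ∃ R : InjCores B M, ∀ i, n < i → Subsingleton (R.I i)})

variable {B}

/-- The cochain groups `Hom_B(P n, N)` of the complex computing `Ext_B(M, N)`. -/
def homC {M : Type u} [AddCommGroup M] [Module B M] (R : ProjRes B M)
    (N : Type u) [AddCommGroup N] [Module B N] (n : ℕ) : Type u :=
  R.P n →ₗ[B] N

noncomputable instance {M : Type u} [AddCommGroup M] [Module B M] (R : ProjRes B M)
    (N : Type u) [AddCommGroup N] [Module B N] (n : ℕ) : AddCommGroup (homC R N n) :=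
  inferInstanceAs (AddCommGroup (R.P n →ₗ[B] N))

/-- The differential of the complex `Hom_B(P •, N)`, given by precomposition with `R.d n`. -/
noncomputable def extδ {M : Type u} [AddCommGroup M] [Module B M] (R : ProjRes B M)
    (N : Type u) [AddCommGroup N] [Module B N] (n : ℕ) : homC R N n →+ homC R N (n + 1) where
  toFun f := (f : R.P n →ₗ[B] N).comp (R.d n)
  map_zero' := LinearMap.zero_comp _
  map_add' f g := LinearMap.add_comp _ _ _

/-- Cocycles of the complex `Hom_B(P •, N)`. -/
noncomputable def extCocycles {M : Type u} [AddCommGroup M] [Module B M] (R : ProjRes B M)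
    (N : Type u) [AddCommGroup N] [Module B N] (n : ℕ) : AddSubgroup (homC R N n) :=
  (extδ R N n).ker

/-- Coboundaries of the complex `Hom_B(P •, N)`. -/
noncomputable def extCobound {M : Type u} [AddCommGroup M] [Module B M] (R : ProjRes B M)
    (N : Type u) [AddCommGroup N] [Module B N] : (n : ℕ) → AddSubgroup (homC R N n)
  | 0 => ⊥
  | (m + 1) => (extδ R N m).range

/-- The Ext group `Ext_B^n(M, N)`, computed as the `n`-th cohomology of the complex
`Hom_B(P •, N)` for a projective resolution `P •` of `M`. -/
noncomputable def ExtGrp {M : Type u} [AddCommGroup M] [Module B M] (R : ProjRes B M)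
    (N : Type u) [AddCommGroup N] [Module B N] (n : ℕ) : Type u :=
  extCocycles R N n ⧸ (extCobound R N n).addSubgroupOf (extCocycles R N n)

variable (B)

/-- `Ext_B^n(M, B) ≠ 0` (computed with any projective resolution of `M`). -/
def ExtRegNonzero (M : Type u) [AddCommGroup M] [Module B M] (n : ℕ) : Prop :=
  ∃ R : ProjRes B M, Nontrivial (ExtGrp R B n)

/-- The grade of a module: the infimum of the `i` with `Ext^i(M, B) ≠ 0`. -/
noncomputable def gradeM (M : Type u) [AddCommGroup M] [Module B M] : ℕ∞ :=
  sInf ((fun n : ℕ => (n : ℕ∞)) '' {n | ExtRegNonzero B M n})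

/-- `B` is Auslander-Gorenstein if the regular module has finite injective dimension and
in a minimal injective coresolution `0 → B → I^0 → I^1 → ⋯` one has `pdim I^i ≤ i` for all
`i`. -/
def IsAuslanderGorenstein : Prop :=
  idim B B < ⊤ ∧ ∀ (R : MinInjCores B B) (i : ℕ), pdim B (R.I i) ≤ (i : ℕ∞)

/-- `B` has finite global dimension. -/
def HasFiniteGlobalDimension : Prop :=
  ∃ n : ℕ, ∀ (M : Type u) [AddCommGroup M] [Module B M], pdim B M ≤ (n : ℕ∞)

/-- `B` is Auslander regular if it is Auslander-Gorenstein of finite global dimension. -/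
def IsAuslanderRegular : Prop :=
  IsAuslanderGorenstein B ∧ HasFiniteGlobalDimension B

end Core

section Extras1

variable (B : Type u) [Ring B]

/-- A ring is Iwanaga-Gorenstein if it has finite injective dimension as a right module
and as a left module over itself.  (For `B = Aᵐᵒᵖ` this says that the algebra `A` is
Iwanaga-Gorenstein; right `A`-modules are left `Aᵐᵒᵖ`-modules.) -/
def IsIwanagaGorensteinAlg (A : Type u) [Ring A] : Prop :=
  idim Aᵐᵒᵖ Aᵐᵒᵖ < ⊤ ∧ idim A A < ⊤

/-- `f : S →ₗ[B] I` exhibits `I` as an injective envelope of `S`. -/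
def IsInjectiveEnvelope {S I : Type u} [AddCommGroup S] [Module B S]
    [AddCommGroup I] [Module B I] (f : S →ₗ[B] I) : Prop :=
  Module.Injective B I ∧ Function.Injective f ∧ IsEssentialSub (LinearMap.range f)

/-- `X` is (isomorphic to) a direct summand of `Y`. -/
def IsDirectSummandMod {X Y : Type u} [AddCommGroup X] [Module B X]
    [AddCommGroup Y] [Module B Y] : Prop :=
  ∃ (s : X →ₗ[B] Y) (r : Y →ₗ[B] X), r ∘ₗ s = LinearMap.id

/-- An indecomposable module: nonzero, and not the internal direct sum of two nonzero
submodules. -/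
def IsIndecomposableMod (M : Type u) [AddCommGroup M] [Module B M] : Prop :=
  Nontrivial M ∧ ∀ N₁ N₂ : Submodule B M, IsCompl N₁ N₂ → N₁ = ⊥ ∨ N₂ = ⊥

end Extras1

/-! new stuff -/
section Helpers
variable {B : Type u} [Ring B]

lemma extGrp_subsingleton_iff {M : Type u} [AddCommGroup M] [Module B M] (R : ProjRes B M)
    (N : Type u) [AddCommGroup N] [Module B N] (n : ℕ) :
    Subsingleton (ExtGrp R N n) ↔
      ∀ f : homC R N n, extδ R N n f = 0 → f ∈ extCobound R N n := by
  constructor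
  · intro h f hf
    have hmem : f ∈ extCocycles R N n := hf
    have : (QuotientAddGroup.mk (⟨f, hmem⟩ : extCocycles R N n) : ExtGrp R N n) = 0 :=
      h.elim _ _
    have := (QuotientAddGroup.eq_zero_iff _).1 this
    exact (AddSubgroup.mem_addSubgroupOf).1 this
  · intro h
    constructor
    intro a b
    induction a using QuotientAddGroup.induction_on with
    | H x =>
    induction b using QuotientAddGroup.induction_on with
    | H y =>
    refine QuotientAddGroup.eq.2 ?_
    rw [AddSubgroup.mem_addSubgroupOf]
    have hx : extδ R N n (x : homC R N n) = 0 := x.2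
    have hy : extδ R N n (y : homC R N n) = 0 := y.2
    have : extδ R N n ((-x + y : extCocycles R N n) : homC R N n) = 0 := by
      push_cast
      rw [map_add, map_neg, hx, hy]; abel
    exact h _ this
end Helpers

section Shift
variable {B : Type u} [Ring B]

instance punitProjective : Module.Projective B PUnit.{u+1} := by
  constructor
  exact ⟨0, fun x => by simp [Subsingleton.elim x 0]⟩

/-- Underlying types of the trivial resolution. -/
def trivP (M : Type u) : ℕ → Type u
  | 0 => M
  | _ + 1 => PUnit.{u+1}

instance trivPacg (M : Type u) [AddCommGroup M] : ∀ n, AddCommGroup (trivP M n)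
  | 0 => inferInstanceAs (AddCommGroup M)
  | _ + 1 => inferInstanceAs (AddCommGroup PUnit.{u+1})

instance trivPmod (M : Type u) [AddCommGroup M] [Module B M] : ∀ n, Module B (trivP M n)
  | 0 => inferInstanceAs (Module B M)
  | _ + 1 => inferInstanceAs (Module B PUnit.{u+1})

instance trivP_subsingleton (M : Type u) (n : ℕ) : Subsingleton (trivP M (n + 1)) :=
  inferInstanceAs (Subsingleton PUnit.{u+1})

/-- The trivial projective resolution of a projective module. -/
noncomputable def trivialProjRes (M : Type u) [AddCommGroup M] [Module B M]
    (hM : Module.Projective B M) : ProjRes B M where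
  P := trivP M
  proj := fun n => match n with
    | 0 => hM
    | _ + 1 => punitProjective
  d := fun _ => 0
  π := LinearMap.id (M := trivP M 0)
  surj := Function.surjective_id
  exact_at_zero := by
    intro y
    constructor
    · intro hy
      exact ⟨0, by simp only [LinearMap.zero_apply]; exact hy.symm⟩
    · rintro ⟨x, rfl⟩
      have : x = 0 := Subsingleton.elim x 0
      simp [this]
      rfl
  exact := fun n => by
    intro y
    constructor
    · intro _
      exact ⟨0, Subsingleton.elim _ _⟩
    · intro _
      rw [Subsingleton.elim y 0, map_zero]

/-- Underlying types of the shifted resolution. -/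
def shiftP {W : Type u} [AddCommGroup W] [Module B W] (T : ProjRes B W) (Y : Type u) :
    ℕ → Type u
  | 0 => Y
  | n + 1 => T.P n

instance shiftPacg {W : Type u} [AddCommGroup W] [Module B W] (T : ProjRes B W) (Y : Type u)
    [AddCommGroup Y] : ∀ n, AddCommGroup (shiftP T Y n)
  | 0 => inferInstanceAs (AddCommGroup Y)
  | n + 1 => inferInstanceAs (AddCommGroup (T.P n))

instance shiftPmod {W : Type u} [AddCommGroup W] [Module B W] (T : ProjRes B W) (Y : Type u)
    [AddCommGroup Y] [Module B Y] : ∀ n, Module B (shiftP T Y n)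
  | 0 => inferInstanceAs (Module B Y)
  | n + 1 => inferInstanceAs (Module B (T.P n))

/-- Splice a projective module `Y` with an embedding `ι : W → Y` onto a
resolution of `W`, obtaining a resolution of `Y ⧸ range ι`. -/
noncomputable def shiftRes {W : Type u} [AddCommGroup W] [Module B W] (T : ProjRes B W)
    (Y : Type u) [AddCommGroup Y] [Module B Y] (hY : Module.Projective B Y)
    (i : W →ₗ[B] Y) (hi : Function.Injective i) :
    ProjRes B (Y ⧸ LinearMap.range i) where
  P := shiftP T Y
  proj := fun n => match n with
    | 0 => hY
    | n + 1 => T.proj n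
  d := fun n => match n with
    | 0 => (i.comp T.π : shiftP T Y 1 →ₗ[B] shiftP T Y 0)
    | n + 1 => (T.d n : shiftP T Y (n+2) →ₗ[B] shiftP T Y (n+1))
  π := (LinearMap.range i).mkQ
  surj := Submodule.mkQ_surjective (LinearMap.range i)
  exact_at_zero := by
    refine LinearMap.exact_iff.2 ?_
    show LinearMap.ker (LinearMap.range i).mkQ = LinearMap.range (i.comp T.π)
    rw [Submodule.ker_mkQ]
    rw [LinearMap.range_comp]
    rw [LinearMap.range_eq_top.2 T.surj]
    simp
  exact := fun n => match n with
    | 0 => by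
      refine LinearMap.exact_iff.2 ?_
      have h1 : LinearMap.ker (i.comp T.π) = LinearMap.ker T.π := LinearMap.ker_comp_of_ker_eq_bot _ (LinearMap.ker_eq_bot.2 hi)
      show LinearMap.ker (i.comp T.π) = LinearMap.range (T.d 0)
      rw [h1]
      exact (LinearMap.exact_iff.1 T.exact_at_zero)
    | n + 1 => by
      rw [LinearMap.exact_iff]
      exact LinearMap.exact_iff.1 (T.exact n)

end Shift

section ShiftLemma
variable {B : Type u} [Ring B]

lemma shift_subsingleton {W : Type u} [AddCommGroup W] [Module B W] (T : ProjRes B W)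
    (Y : Type u) [AddCommGroup Y] [Module B Y] (hY : Module.Projective B Y)
    (i : W →ₗ[B] Y) (hi : Function.Injective i)
    (N : Type u) [AddCommGroup N] [Module B N] (j : ℕ)
    (h : Subsingleton (ExtGrp (shiftRes T Y hY i hi) N (j + 2))) :
    Subsingleton (ExtGrp T N (j + 1)) := by
  rw [extGrp_subsingleton_iff] at h ⊢
  intro f hf
  exact h f hf

end ShiftLemma

section Factor
variable {B : Type u} [Ring B]

/-- A cocycle with values in an injective module is a coboundary. -/
lemma factor_through_d {X : Type u} [AddCommGroup X] [Module B X] (T : ProjRes B X)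
    (J : Type u) [AddCommGroup J] [Module B J] (hJ : Module.Injective B J)
    (j : ℕ) (f : T.P (j+1) →ₗ[B] J) (hf : f ∘ₗ T.d (j+1) = 0) :
    ∃ h : T.P j →ₗ[B] J, h ∘ₗ T.d j = f := by
  have hker : LinearMap.ker (T.d j) ≤ LinearMap.ker f := by
    rw [LinearMap.exact_iff.1 (T.exact j)]
    rintro x ⟨y, rfl⟩
    simpa using LinearMap.congr_fun hf y
  let fbar := (LinearMap.ker (T.d j)).liftQ f hker
  let e := (T.d j).quotKerEquivRange
  let g : LinearMap.range (T.d j) →ₗ[B] J := fbar.comp (e.symm : _ →ₗ[B] _)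
  obtain ⟨h, hh⟩ := hJ.out (LinearMap.range (T.d j)).subtype (Submodule.injective_subtype _) g
  refine ⟨h, ?_⟩
  ext x
  have h1 : (⟨T.d j x, ⟨x, rfl⟩⟩ : LinearMap.range (T.d j)) = e (Submodule.Quotient.mk x) := by
    apply Subtype.ext
    rw [LinearMap.quotKerEquivRange_apply_mk]
  have h2 : h (T.d j x) = g ⟨T.d j x, ⟨x, rfl⟩⟩ := hh ⟨T.d j x, ⟨x, rfl⟩⟩
  simp only [LinearMap.comp_apply]
  rw [h2, h1]
  show fbar (e.symm (e (Submodule.Quotient.mk x))) = f x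
  rw [LinearEquiv.symm_apply_apply]
  exact Submodule.liftQ_apply _ _ _

end Factor

section Vanish
variable {B : Type u} [Ring B]

/-- Truncation of an injective coresolution: a coresolution of the cokernel of `ι`. -/
noncomputable def truncInjCores {N : Type u} [AddCommGroup N] [Module B N]
    (R : InjCores B N) : InjCores B ((R.I 0) ⧸ LinearMap.range R.ι) where
  I := fun n => R.I (n+1)
  inj := fun n => R.inj (n+1)
  ι := (LinearMap.range R.ι).liftQ (R.d 0)
        (le_of_eq (LinearMap.exact_iff.1 R.exact_at_zero).symm)
  d := fun n => R.d (n+1)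
  mono := by
    rw [← LinearMap.ker_eq_bot]
    exact Submodule.ker_liftQ_eq_bot' _ _ (LinearMap.exact_iff.1 R.exact_at_zero).symm
  exact_at_zero := by
    rw [LinearMap.exact_iff, Submodule.range_liftQ]
    exact LinearMap.exact_iff.1 (R.exact 0)
  exact := fun n => R.exact (n+1)

/-- Ext vanishes above the length of an injective coresolution of the coefficients. -/
lemma ext_vanish (m : ℕ) :
    ∀ (N : Type u) [AddCommGroup N] [Module B N] (R : InjCores B N),
      (∀ i, m < i → Subsingleton (R.I i)) →
      ∀ (X : Type u) [AddCommGroup X] [Module B X] (T : ProjRes B X) (j : ℕ), m < j →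
        Subsingleton (ExtGrp T N j) := by
  induction m with
  | zero =>
    intro N _ _ R hlen X _ _ T j hj
    -- `ι : N → I 0` is bijective since `d 0 = 0`.
    have hd0 : (R.d 0) = 0 := by
      have : Subsingleton (R.I 1) := hlen 1 (by norm_num)
      exact Subsingleton.elim _ _
    have hsurj : Function.Surjective R.ι := by
      rw [← LinearMap.range_eq_top]
      rw [← (LinearMap.exact_iff.1 R.exact_at_zero)]
      rw [hd0, LinearMap.ker_zero]
    obtain ⟨j', rfl⟩ : ∃ j', j = j' + 1 := ⟨j - 1, by omega⟩
    rw [extGrp_subsingleton_iff]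
    intro f₀ hf
    let f : T.P (j'+1) →ₗ[B] N := f₀
    have hfeq : f₀ = f := rfl
    rw [hfeq] at hf ⊢
    have hf' : (R.ι.comp f) ∘ₗ T.d (j'+1) = 0 := by
      rw [LinearMap.comp_assoc, show f ∘ₗ T.d (j'+1) = 0 from hf, LinearMap.comp_zero]
    obtain ⟨h, hh⟩ := factor_through_d T (R.I 0) (R.inj 0) j' (R.ι.comp f) hf'
    let e : N ≃ₗ[B] R.I 0 := LinearEquiv.ofBijective R.ι ⟨R.mono, hsurj⟩
    refine ⟨(e.symm : R.I 0 →ₗ[B] N).comp h, ?_⟩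
    show ((e.symm : R.I 0 →ₗ[B] N).comp h) ∘ₗ T.d j' = f
    ext x
    have := LinearMap.congr_fun hh x
    simp only [LinearMap.comp_apply] at this ⊢
    rw [this]
    show e.symm (e (f x)) = f x
    exact e.symm_apply_apply _
  | succ m ih =>
    intro N _ _ R hlen X _ _ T j hj
    obtain ⟨j', rfl⟩ : ∃ j', j = j' + 1 := ⟨j - 1, by omega⟩
    obtain ⟨j'', rfl⟩ : ∃ j'', j' = j'' + 1 := ⟨j' - 1, by omega⟩
    rw [extGrp_subsingleton_iff]
    intro f₀ hf
    let f : T.P (j''+1+1) →ₗ[B] N := f₀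
    have hfeq : f₀ = f := rfl
    rw [hfeq] at hf ⊢
    have hf0 : f ∘ₗ T.d (j''+1+1) = 0 := hf
    -- step 1: factor ι ∘ f through d
    have hf' : (R.ι.comp f) ∘ₗ T.d (j''+1+1) = 0 := by
      rw [LinearMap.comp_assoc, hf0, LinearMap.comp_zero]
    obtain ⟨h₀, hh₀⟩ := factor_through_d T (R.I 0) (R.inj 0) (j''+1) (R.ι.comp f) hf'
    -- step 2: project to N' and use induction
    set N' := (R.I 0) ⧸ LinearMap.range R.ι with hN'
    let p : R.I 0 →ₗ[B] N' := (LinearMap.range R.ι).mkQ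
    have hps : Function.Surjective p := Submodule.mkQ_surjective _
    have hlen' : ∀ i, m < i → Subsingleton ((truncInjCores R).I i) := by
      intro i hi
      exact hlen (i+1) (by omega)
    have hsub : Subsingleton (ExtGrp T N' (j''+1)) :=
      ih N' (truncInjCores R) hlen' X T (j''+1) (by omega)
    rw [extGrp_subsingleton_iff] at hsub
    have hcsub : extδ T N' (j''+1) (p.comp h₀) = 0 := by
      show (p.comp h₀) ∘ₗ T.d (j''+1) = 0
      rw [LinearMap.comp_assoc, hh₀]
      ext x
      simp only [LinearMap.comp_apply]
      exact (Submodule.Quotient.mk_eq_zero _).2 ⟨f x, rfl⟩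
    obtain ⟨k, hk⟩ := hsub (p.comp h₀) hcsub
    -- hk : extδ T N' j'' k = p ∘ h₀, i.e. k ∘ₗ T.d j'' = p ∘ₗ h₀
    -- step 3: lift k through p using projectivity of T.P j''
    obtain ⟨kt, hkt⟩ :=
      Module.projective_lifting_property (h := T.proj j'') p (k : T.P j'' →ₗ[B] N') hps
    -- step 4: u = h₀ - kt ∘ d j'' lands in range ι
    let u : T.P (j''+1) →ₗ[B] R.I 0 := h₀ - kt ∘ₗ T.d j''
    have hu : ∀ x, u x ∈ LinearMap.range R.ι := by
      intro x
      have h3 : p (u x) = 0 := by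
        have : p.comp u = 0 := by
          show p.comp (h₀ - kt ∘ₗ T.d j'') = 0
          rw [LinearMap.comp_sub]
          rw [← LinearMap.comp_assoc, hkt]
          exact sub_eq_zero.2 hk.symm
        exact LinearMap.congr_fun this x
      rwa [← Submodule.Quotient.mk_eq_zero]
    let u' : T.P (j''+1) →ₗ[B] LinearMap.range R.ι := u.codRestrict _ hu
    let eι : N ≃ₗ[B] LinearMap.range R.ι := LinearEquiv.ofInjective R.ι R.mono
    let w : T.P (j''+1) →ₗ[B] N := (eι.symm : _ →ₗ[B] N).comp u'
    have hιw : ∀ x, R.ι (w x) = u x := by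
      intro x
      show R.ι (eι.symm (u' x)) = u x
      have : ∀ y : LinearMap.range R.ι, R.ι (eι.symm y) = (y : R.I 0) := by
        intro y
        conv_rhs => rw [← eι.apply_symm_apply y]
        rfl
      rw [this]
      rfl
    refine ⟨w, ?_⟩
    show w ∘ₗ T.d (j''+1) = f
    ext x
    apply R.mono
    simp only [LinearMap.comp_apply]
    rw [hιw]
    show h₀ (T.d (j''+1) x) - kt (T.d j'' (T.d (j''+1) x)) = R.ι (f x)
    have hdd : T.d j'' (T.d (j''+1) x) = 0 := (T.exact j'' (T.d (j''+1) x)).2 ⟨x, rfl⟩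
    rw [hdd, map_zero, sub_zero]
    exact LinearMap.congr_fun hh₀ x

end Vanish

section Dual
open MulOpposite
variable (A : Type u) [Ring A]

/-- Precomposition on `B`-duals as an `A`-linear map, where `B = Aᵐᵒᵖ`. -/
noncomputable def dcomp {P P' : Type u} [AddCommGroup P] [AddCommGroup P']
    [Module Aᵐᵒᵖ P] [Module Aᵐᵒᵖ P'] (d : P' →ₗ[Aᵐᵒᵖ] P) :
    (P →ₗ[Aᵐᵒᵖ] Aᵐᵒᵖ) →ₗ[A] (P' →ₗ[Aᵐᵒᵖ] Aᵐᵒᵖ) where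
  toFun f := f ∘ₗ d
  map_add' f g := LinearMap.add_comp _ _ _
  map_smul' a f := by
    ext x
    simp [LinearMap.smul_apply]

/-- The `A`-linear isomorphism between the `Aᵐᵒᵖ`-dual of `(Fin k → Aᵐᵒᵖ)` and `Fin k → A`. -/
noncomputable def freeDualEquiv (k : ℕ) :
    ((Fin k → Aᵐᵒᵖ) →ₗ[Aᵐᵒᵖ] Aᵐᵒᵖ) ≃ₗ[A] (Fin k → A) where
  toFun f := fun i => unop (f (Pi.single i 1))
  map_add' f g := by funext i; simp
  map_smul' a f := by funext i; simp [LinearMap.smul_apply]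
  invFun v :=
    { toFun := fun x => op (∑ i, v i * unop (x i))
      map_add' := fun x y => by
        simp [mul_add, Finset.sum_add_distrib]
      map_smul' := fun c x => by
        simp only [Pi.smul_apply, smul_eq_mul, unop_mul, RingHom.id_apply]
        rw [show c * op (∑ i, v i * unop (x i)) = op ((∑ i, v i * unop (x i)) * unop c) from rfl,
          Finset.sum_mul]
        congr 1
        refine Finset.sum_congr rfl fun i _ => ?_
        rw [mul_assoc] }
  left_inv f := by
    refine LinearMap.ext fun x => ?_
    show op (∑ i, unop (f (Pi.single i 1)) * unop (x i)) = f x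
    have hx : x = ∑ i, (x i) • Pi.single i (1 : Aᵐᵒᵖ) := by
      funext j
      simp [Pi.single_apply, Finset.sum_apply]
    conv_rhs => rw [hx]
    rw [map_sum]
    rw [Finset.op_sum]
    refine Finset.sum_congr rfl fun i _ => ?_
    rw [map_smul]
    show op (unop (f (Pi.single i 1)) * unop (x i)) = x i * f (Pi.single i 1)
    rfl
  right_inv v := by
    funext i
    show unop (op (∑ j, v j * unop (Pi.single (M := fun _ => Aᵐᵒᵖ) i 1 j))) = v i
    simp [Pi.single_apply, apply_ite unop, mul_ite, Finset.sum_ite_eq']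

noncomputable instance dualProjective (k : ℕ) :
    Module.Projective A ((Fin k → Aᵐᵒᵖ) →ₗ[Aᵐᵒᵖ] Aᵐᵒᵖ) :=
  Module.Projective.of_equiv (freeDualEquiv A k).symm


/-- If every functional on the dual of `Fin k → Aᵐᵒᵖ` extends along the transpose of `d`,
then `d` is surjective. -/
lemma dual_surjective (k l : ℕ) (d : (Fin l → Aᵐᵒᵖ) →ₗ[Aᵐᵒᵖ] (Fin k → Aᵐᵒᵖ))
    (hext : ∀ φ : ((Fin k → Aᵐᵒᵖ) →ₗ[Aᵐᵒᵖ] Aᵐᵒᵖ) →ₗ[A] A,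
      ∃ ψ : ((Fin l → Aᵐᵒᵖ) →ₗ[Aᵐᵒᵖ] Aᵐᵒᵖ) →ₗ[A] A, ψ ∘ₗ dcomp A d = φ) :
    Function.Surjective d := by
  have key : ∀ j : Fin k, ∃ v, d v = Pi.single j 1 := by
    intro j
    obtain ⟨ψ, hψ⟩ := hext ((LinearMap.proj j) ∘ₗ (freeDualEquiv A k).toLinearMap)
    set c : Fin l → A := fun t => ψ ((freeDualEquiv A l).symm (Pi.single t 1)) with hc
    have hψg : ∀ g, ψ g = ∑ t, (freeDualEquiv A l g) t * c t := by
      intro g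
      have hg : g = ∑ t, ((freeDualEquiv A l) g t) •
          (freeDualEquiv A l).symm (Pi.single t 1) := by
        apply (freeDualEquiv A l).injective
        rw [map_sum]
        simp only [map_smul, LinearEquiv.apply_symm_apply]
        funext t'
        simp [Finset.sum_apply, Pi.single_apply]
      conv_lhs => rw [hg, map_sum]
      refine Finset.sum_congr rfl fun t _ => ?_
      rw [map_smul, smul_eq_mul]
    set v : Fin l → Aᵐᵒᵖ := ∑ t, (op (c t)) • Pi.single t (1:Aᵐᵒᵖ) with hv
    refine ⟨v, ?_⟩
    have claim : ∀ f : (Fin k → Aᵐᵒᵖ) →ₗ[Aᵐᵒᵖ] Aᵐᵒᵖ, f (d v) = f (Pi.single j 1) := by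
      intro f
      have e1 : f (d v) = op (∑ t, unop (f (d (Pi.single t 1))) * c t) := by
        rw [hv, map_sum, map_sum]
        rw [Finset.op_sum]
        refine Finset.sum_congr rfl fun t _ => ?_
        rw [map_smul, map_smul]
        show op (c t) * f (d (Pi.single t 1)) = _
        rw [show op (c t) * f (d (Pi.single t 1))
          = op (unop (f (d (Pi.single t 1))) * c t) from rfl]
      have e2 : (∑ t, unop (f (d (Pi.single t 1))) * c t) = ψ (dcomp A d f) := by
        rw [hψg]
        rfl
      have e3 : ψ (dcomp A d f) = unop (f (Pi.single j 1)) := by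
        have := LinearMap.congr_fun hψ f
        exact this
      rw [e1, e2, e3, op_unop]
    funext i
    have := claim (LinearMap.proj i)
    exact this
  intro x
  choose v hv using key
  refine ⟨∑ j, x j • v j, ?_⟩
  rw [map_sum]
  funext i
  rw [Finset.sum_apply]
  have : ∀ j, (d (x j • v j)) i = (x j • Pi.single j (1:Aᵐᵒᵖ) : Fin k → Aᵐᵒᵖ) i := by
    intro j
    rw [map_smul, hv j]
  rw [Finset.sum_congr rfl fun j _ => this j]
  simp [Pi.single_apply, Finset.sum_ite_eq, mul_ite]

end Dual

section FreeRes
variable (B : Type u) [Ring B]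

/-- A chosen finite free cover of a finitely generated module. -/
structure Stage (T : Type u) [AddCommGroup T] [Module B T] where
  k : ℕ
  q : (Fin k → B) →ₗ[B] T
  surj : Function.Surjective q

noncomputable def mkStage (T : Type u) [AddCommGroup T] [Module B T]
    (h : Module.Finite B T) : Stage B T := by
  choose n f hf using (Module.Finite.exists_fin' B T)
  exact ⟨n, f, hf⟩

lemma subFinite [IsNoetherianRing B] {k : ℕ} (N : Submodule B (Fin k → B)) :
    Module.Finite B ↥N := by
  rw [Module.Finite.iff_fg]
  exact IsNoetherian.noetherian N

variable [IsNoetherianRing B]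

noncomputable def freeResAux (S : Type u) [AddCommGroup S] [Module B S]
    (hfin : Module.Finite B S) : ℕ → Σ k : ℕ, Submodule B (Fin k → B)
  | 0 => ⟨(mkStage B S hfin).k, LinearMap.ker (mkStage B S hfin).q⟩
  | n+1 =>
      ⟨(mkStage B ↥((freeResAux S hfin n).2) (subFinite B _)).k,
        LinearMap.ker (mkStage B ↥((freeResAux S hfin n).2) (subFinite B _)).q⟩

/-- A resolution of a f.g. module over a Noetherian ring by finite free modules. -/
noncomputable def freeRes (S : Type u) [AddCommGroup S] [Module B S]
    (hfin : Module.Finite B S) : ProjRes B S where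
  P n := Fin (freeResAux B S hfin n).1 → B
  proj n := inferInstance
  π := (mkStage B S hfin).q
  d n := ((freeResAux B S hfin n).2).subtype ∘ₗ
    (mkStage B ↥((freeResAux B S hfin n).2) (subFinite B _)).q
  surj := (mkStage B S hfin).surj
  exact_at_zero := by
    refine LinearMap.exact_iff.2 ?_
    show LinearMap.ker (mkStage B S hfin).q = LinearMap.range (((freeResAux B S hfin 0).2).subtype ∘ₗ
      (mkStage B ↥((freeResAux B S hfin 0).2) (subFinite B _)).q)
    rw [LinearMap.range_comp, LinearMap.range_eq_top.2 (mkStage B _ (subFinite B _)).surj,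
      Submodule.map_top, Submodule.range_subtype]
    rfl
  exact := fun n => by
    refine LinearMap.exact_iff.2 ?_
    show LinearMap.ker (((freeResAux B S hfin n).2).subtype ∘ₗ
      (mkStage B ↥((freeResAux B S hfin n).2) (subFinite B _)).q) =
      LinearMap.range (((freeResAux B S hfin (n+1)).2).subtype ∘ₗ
      (mkStage B ↥((freeResAux B S hfin (n+1)).2) (subFinite B _)).q)
    rw [LinearMap.range_comp, LinearMap.range_eq_top.2 (mkStage B _ (subFinite B _)).surj,
      Submodule.map_top, Submodule.range_subtype]
    rw [LinearMap.ker_comp, Submodule.ker_subtype, Submodule.comap_bot]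
    rfl

lemma freeRes_P (S : Type u) [AddCommGroup S] [Module B S] (hfin : Module.Finite B S) (n : ℕ) :
    (freeRes B S hfin).P n = (Fin (freeResAux B S hfin n).1 → B) := rfl

end FreeRes

section Chain
variable (A : Type u) [Ring A] (Q : ℕ → Type u) [∀ n, AddCommGroup (Q n)]
  [∀ n, Module A (Q n)] (δ : (n : ℕ) → Q n →ₗ[A] Q (n + 1))

/-- The state of the cosyzygy chain. -/
structure ChainSt (k : ℕ) where
  V : Type u
  [acg : AddCommGroup V]
  [mod : Module A V]
  T : ProjRes A V
  e : V →ₗ[A] Q (k + 1)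
  inj : Function.Injective e
  rng : LinearMap.range e = LinearMap.range (δ k)

attribute [instance] ChainSt.acg ChainSt.mod
end Chain


section Master
variable {A : Type u} [Ring A] (Q : ℕ → Type u) [∀ n, AddCommGroup (Q n)]
  [∀ n, Module A (Q n)] (hproj : ∀ n, Module.Projective A (Q n))
  (δ : (n : ℕ) → Q n →ₗ[A] Q (n + 1))
  (hinj : Function.Injective (δ 0))
  (hex : ∀ n, LinearMap.ker (δ (n + 1)) = LinearMap.range (δ n))

/-- The cosyzygy chain of an exact complex of projectives. -/
noncomputable def chainSt : (k : ℕ) → ChainSt A Q δ k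
  | 0 => ⟨Q 0, trivialProjRes _ (hproj 0), δ 0, hinj, rfl⟩
  | k + 1 =>
      let s := chainSt k
      ⟨Q (k + 1) ⧸ LinearMap.range s.e,
        shiftRes s.T (Q (k + 1)) (hproj (k + 1)) s.e s.inj,
        (LinearMap.range s.e).liftQ (δ (k + 1))
          (by rw [s.rng, ← hex k]),
        by
          rw [← LinearMap.ker_eq_bot]
          exact Submodule.ker_liftQ_eq_bot' _ _ (s.rng.trans (hex k).symm),
        by rw [Submodule.range_liftQ]⟩

include hproj hinj hex in
/-- Master lemma: if the coefficients have a finite injective coresolution, then any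
functional on `Q 0` extends along `δ 0`. -/
lemma master_extend (NA : Type u) [AddCommGroup NA] [Module A NA]
    (RN : InjCores A NA) (m : ℕ) (hlen : ∀ i, m < i → Subsingleton (RN.I i))
    (φ : Q 0 →ₗ[A] NA) : ∃ ψ : Q 1 →ₗ[A] NA, ψ ∘ₗ δ 0 = φ := by
  -- descending chain of Ext subsingletons
  have key : ∀ i, i ≤ m →
      Subsingleton (ExtGrp (chainSt Q hproj δ hinj hex (m + 1 - i)).T NA (m + 1 - i)) := by
    intro i
    induction i with
    | zero =>
      intro _
      simp only [Nat.sub_zero]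
      exact ext_vanish m NA RN hlen _ _ (m + 1) (by omega)
    | succ i ih =>
      intro hi
      have h1 := ih (by omega)
      have e1 : m + 1 - i = (m + 1 - (i + 1)) + 1 := by omega
      obtain ⟨j, hj⟩ : ∃ j, m + 1 - (i + 1) = j + 1 := ⟨m - 1 - i, by omega⟩
      rw [e1, hj] at h1
      rw [hj]
      -- h1 : Subsingleton (ExtGrp (chainSt (j+1+1)).T NA (j+2))
      exact shift_subsingleton (chainSt Q hproj δ hinj hex (j+1)).T (Q (j+1+1))
        (hproj (j+1+1)) (chainSt Q hproj δ hinj hex (j+1)).e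
        (chainSt Q hproj δ hinj hex (j+1)).inj NA j h1
  have C1 : Subsingleton (ExtGrp (chainSt Q hproj δ hinj hex 1).T NA 1) := by
    have h2 := key m (le_refl m)
    have e2 : m + 1 - m = 1 := by omega
    rw [e2] at h2
    exact h2
  rw [extGrp_subsingleton_iff] at C1
  have hco : extδ (chainSt Q hproj δ hinj hex 1).T NA 1
      (φ : homC (chainSt Q hproj δ hinj hex 1).T NA 1) = 0 := by
    show (φ : (chainSt Q hproj δ hinj hex 1).T.P 1 →ₗ[A] NA) ∘ₗ
      (chainSt Q hproj δ hinj hex 1).T.d 1 = 0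
    ext x
    haveI : Subsingleton ((chainSt Q hproj δ hinj hex 1).T.P (1+1)) := by
      exact inferInstanceAs (Subsingleton PUnit.{u+1})
    rw [Subsingleton.elim x 0]
    simp
  obtain ⟨ψ, hψ⟩ := C1 φ hco
  exact ⟨ψ, hψ⟩

end Master

/-- Let `A` be an Iwanaga-Gorenstein finite dimensional algebra over a
field `K`.  Then every simple right `A`-module `S` (= left `Aᵐᵒᵖ`-module) has finite
grade, i.e. there is some `i ≥ 0` with `Ext_A^i(S, A) ≠ 0`. -/
theorem statement_0 (K A : Type u) [Field K] [Ring A] [Algebra K A] [FiniteDimensional K A]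
    (hIG : IsIwanagaGorensteinAlg A)
    (S : Type u) [AddCommGroup S] [Module Aᵐᵒᵖ S] (hS : IsSimpleModule Aᵐᵒᵖ S) :
    ∃ i : ℕ, ExtRegNonzero Aᵐᵒᵖ S i := by
  classical
  by_contra hcon
  push_neg at hcon
  -- hcon : ∀ i, ¬ ExtRegNonzero Aᵐᵒᵖ S i
  haveI : IsNoetherianRing Aᵐᵒᵖ := isNoetherian_of_tower K inferInstance
  haveI hnt : Nontrivial S := IsSimpleModule.nontrivial Aᵐᵒᵖ S
  have hfin : Module.Finite Aᵐᵒᵖ S := by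
    obtain ⟨x, hx⟩ := exists_ne (0 : S)
    have hspan : Submodule.span Aᵐᵒᵖ ({x} : Set S) = ⊤ := by
      rcases (IsSimpleOrder.eq_bot_or_eq_top (Submodule.span Aᵐᵒᵖ ({x} : Set S))) with h | h
      · exact absurd (Submodule.span_singleton_eq_bot.1 h) hx
      · exact h
    exact ⟨(Submodule.fg_def).2 ⟨{x}, Set.finite_singleton x, hspan⟩⟩
  set R := freeRes Aᵐᵒᵖ S hfin with hR
  have hsub : ∀ i, Subsingleton (ExtGrp R Aᵐᵒᵖ i) := fun i =>
    not_nontrivial_iff_subsingleton.1 (fun hn => hcon i ⟨R, hn⟩)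
  set Q : ℕ → Type u := fun n => (R.P n →ₗ[Aᵐᵒᵖ] Aᵐᵒᵖ) with hQ
  set δ : (n : ℕ) → Q n →ₗ[A] Q (n+1) := fun n => dcomp A (R.d n) with hδ
  have hproj : ∀ n, Module.Projective A (Q n) := fun n => by
    exact dualProjective A (freeResAux Aᵐᵒᵖ S hfin n).1
  have hinj : Function.Injective (δ 0) := by
    rw [← LinearMap.ker_eq_bot]
    rw [eq_bot_iff]
    intro f hf
    have hf' : extδ R Aᵐᵒᵖ 0 f = 0 := hf
    have := (extGrp_subsingleton_iff R Aᵐᵒᵖ 0).1 (hsub 0) f hf'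
    exact this
  have hex : ∀ n, LinearMap.ker (δ (n+1)) = LinearMap.range (δ n) := by
    intro n
    apply le_antisymm
    · intro f hf
      have hf' : extδ R Aᵐᵒᵖ (n+1) f = 0 := hf
      have := (extGrp_subsingleton_iff R Aᵐᵒᵖ (n+1)).1 (hsub (n+1)) f hf'
      obtain ⟨g, hg⟩ := this
      exact ⟨g, hg⟩
    · rintro f ⟨g, rfl⟩
      show (g ∘ₗ R.d n) ∘ₗ R.d (n+1) = 0
      ext x
      simp only [LinearMap.comp_apply, LinearMap.zero_apply]
      rw [(R.exact n (R.d (n+1) x)).2 ⟨x, rfl⟩, map_zero]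
  obtain ⟨m, RN, hlen⟩ : ∃ (m : ℕ) (RN : InjCores A A),
      ∀ i, m < i → Subsingleton (RN.I i) := by
    have h2 := hIG.2
    unfold idim at h2
    obtain ⟨x, hxmem, -⟩ := sInf_lt_iff.1 h2
    obtain ⟨n, hn, rfl⟩ := hxmem
    exact ⟨n, hn.choose, hn.choose_spec⟩
  have hext : ∀ φ : Q 0 →ₗ[A] A, ∃ ψ : Q 1 →ₗ[A] A, ψ ∘ₗ δ 0 = φ := fun φ =>
    master_extend Q hproj δ hinj hex A RN m hlen φ
  have hsurj : Function.Surjective (R.d 0) :=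
    dual_surjective A (freeResAux Aᵐᵒᵖ S hfin 0).1 (freeResAux Aᵐᵒᵖ S hfin 1).1 (R.d 0) hext
  have hzero : ∀ s : S, s = 0 := by
    intro s
    obtain ⟨x, rfl⟩ := R.surj s
    obtain ⟨y, rfl⟩ := hsurj x
    exact (R.exact_at_zero (R.d 0 y)).2 ⟨y, rfl⟩
  obtain ⟨a, b, hab⟩ := hnt
  exact hab ((hzero a).trans (hzero b).symm)
end

section
/- Let A be a finite dimensional algebra over a field K, let M be a finitely generated right A-module, and let S be a simple submodule of M with grade S < ∞. Then grade S ≤ pdim M, the projective dimension of M. -/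
/-! ## Basic homological algebra infrastructure for (right) modules over a ring -/

universe u

/-! ## Auxiliary machinery for Statement 2 -/

noncomputable section St2Aux

namespace St2Aux

variable {B : Type u} [Ring B]

section CocycleLemmas

variable {N : Type u} [AddCommGroup N] [Module B N] (RS : ProjRes B N)

theorem cocycle_mem_cobound {i : ℕ} (hsub : Subsingleton (ExtGrp RS B i))
    (f : RS.P i →ₗ[B] B) (hf : f ∘ₗ RS.d i = 0) : (f : homC RS B i) ∈ extCobound RS B i := by
  have hmem : (f : homC RS B i) ∈ extCocycles RS B i := by
    exact AddMonoidHom.mem_ker.mpr hf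
  let z : extCocycles RS B i := ⟨f, hmem⟩
  haveI : Subsingleton
      (↥(extCocycles RS B i) ⧸ (extCobound RS B i).addSubgroupOf (extCocycles RS B i)) := hsub
  have h : (QuotientAddGroup.mk z : ↥(extCocycles RS B i) ⧸
      (extCobound RS B i).addSubgroupOf (extCocycles RS B i)) = QuotientAddGroup.mk 0 :=
    Subsingleton.elim _ _
  rw [QuotientAddGroup.eq] at h
  have h2 : ((-z + 0 : extCocycles RS B i) : homC RS B i) ∈ extCobound RS B i :=
    (AddSubgroup.mem_addSubgroupOf).mp h
  have h3 : ((z : extCocycles RS B i) : homC RS B i) ∈ extCobound RS B i := by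
    simpa using (AddSubgroup.neg_mem _ h2 : (-(-z + 0) : extCocycles RS B i).1 ∈ extCobound RS B i)
  exact h3

theorem cocycle_zero (hsub : Subsingleton (ExtGrp RS B 0))
    (f : RS.P 0 →ₗ[B] B) (hf : f ∘ₗ RS.d 0 = 0) : f = 0 := by
  have h := cocycle_mem_cobound RS hsub f hf
  exact AddSubgroup.mem_bot.mp h

theorem cocycle_cobound {j : ℕ} (hsub : Subsingleton (ExtGrp RS B (j + 1)))
    (f : RS.P (j+1) →ₗ[B] B) (hf : f ∘ₗ RS.d (j+1) = 0) :
    ∃ h : RS.P j →ₗ[B] B, f = h ∘ₗ RS.d j := by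
  have h := cocycle_mem_cobound RS hsub f hf
  rw [extCobound] at h
  obtain ⟨g, hg⟩ := h
  exact ⟨g, hg.symm⟩

end CocycleLemmas

section KeyLemmas

variable {Q1 Q2 Q0 : Type u} [AddCommGroup Q1] [Module B Q1] [AddCommGroup Q2] [Module B Q2]
  [AddCommGroup Q0] [Module B Q0]

/-- A cocycle with values in a projective module is a coboundary (positive degree),
provided this holds with values in `B` and the source is finitely generated. -/
theorem key (e2 : Q2 →ₗ[B] Q1) (e1 : Q1 →ₗ[B] Q0)
    (hcob : ∀ c : Q1 →ₗ[B] B, c ∘ₗ e2 = 0 → ∃ h : Q0 →ₗ[B] B, c = h ∘ₗ e1)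
    (hfin : Module.Finite B Q1)
    {P : Type u} [AddCommGroup P] [Module B P] (hP : Module.Projective B P)
    (f : Q1 →ₗ[B] P) (hf : f ∘ₗ e2 = 0) : ∃ h : Q0 →ₗ[B] P, f = h ∘ₗ e1 := by
  haveI := Classical.decEq P
  obtain ⟨s, hs⟩ := hP.out
  set t : (P →₀ B) →ₗ[B] P := Finsupp.linearCombination B id with ht
  set g : Q1 →ₗ[B] (P →₀ B) := s ∘ₗ f with hgdef
  have hg : g ∘ₗ e2 = 0 := by rw [hgdef, LinearMap.comp_assoc, hf, LinearMap.comp_zero]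
  have hc : ∀ x : P, ∃ h : Q0 →ₗ[B] B, (Finsupp.lapply x ∘ₗ g : Q1 →ₗ[B] B) = h ∘ₗ e1 := by
    intro x
    apply hcob
    rw [LinearMap.comp_assoc, hg, LinearMap.comp_zero]
  choose hh hhspec using hc
  obtain ⟨T, hT⟩ : (⊤ : Submodule B Q1).FG := hfin.1
  set s₀ : Finset P := T.sup fun q => (g q).support with hs₀
  have hsup : ∀ q : Q1, (g q).support ⊆ s₀ := by
    intro q
    have hq : q ∈ Submodule.span B (T : Set Q1) := hT ▸ Submodule.mem_top
    induction hq using Submodule.span_induction with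
    | mem q hq => exact Finset.le_sup (f := fun q => (g q).support) hq
    | zero => simp
    | add a b _ _ ha hb =>
      rw [map_add]
      exact subset_trans Finsupp.support_add (Finset.union_subset ha hb)
    | smul b a _ ha =>
      refine subset_trans ?_ ha
      rw [map_smul]
      exact Finsupp.support_smul
  set H : Q0 →ₗ[B] (P →₀ B) := ∑ x ∈ s₀, (Finsupp.lsingle x) ∘ₗ (hh x) with hH
  have hHe : H ∘ₗ e1 = g := by
    ext q
    have h1 : (H ∘ₗ e1) q = ∑ x ∈ s₀, Finsupp.single x ((g q) x) := by
      simp only [hH, LinearMap.comp_apply, LinearMap.sum_apply]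
      refine Finset.sum_congr rfl fun x _ => ?_
      have := congrArg (fun (φ : Q1 →ₗ[B] B) => φ q) (hhspec x)
      simp only [LinearMap.comp_apply, Finsupp.lapply_apply] at this
      simp [LinearMap.comp_apply, Finsupp.lsingle_apply, ← this]
    have h2 : ∑ x ∈ s₀, Finsupp.single x ((g q) x) = g q := by
      rw [← Finsupp.sum_of_support_subset (g q) (hsup q) (fun a b => Finsupp.single a b)
        (by simp)]
      exact Finsupp.sum_single _
    rw [h1, h2]
  refine ⟨t ∘ₗ H, ?_⟩
  have : t ∘ₗ g = f := by ext q; exact hs (f q)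
  rw [← this, ← hHe, LinearMap.comp_assoc]

/-- Degree-zero version: a `Hom`-cocycle with values in a projective module vanishes
provided this holds with values in `B`. -/
theorem key0 (e2 : Q2 →ₗ[B] Q1)
    (hcob : ∀ c : Q1 →ₗ[B] B, c ∘ₗ e2 = 0 → c = 0)
    {P : Type u} [AddCommGroup P] [Module B P] (hP : Module.Projective B P)
    (f : Q1 →ₗ[B] P) (hf : f ∘ₗ e2 = 0) : f = 0 := by
  obtain ⟨s, hs⟩ := hP.out
  set t : (P →₀ B) →ₗ[B] P := Finsupp.linearCombination B id with ht
  set g : Q1 →ₗ[B] (P →₀ B) := s ∘ₗ f with hgdef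
  have hg : g ∘ₗ e2 = 0 := by rw [hgdef, LinearMap.comp_assoc, hf, LinearMap.comp_zero]
  have hc : ∀ x : P, (Finsupp.lapply x ∘ₗ g : Q1 →ₗ[B] B) = 0 := by
    intro x; apply hcob; rw [LinearMap.comp_assoc, hg, LinearMap.comp_zero]
  have hgz : g = 0 := by
    ext q x
    have := congrArg (fun (φ : Q1 →ₗ[B] B) => φ q) (hc x)
    simpa using this
  have : t ∘ₗ g = f := by ext q; exact hs (f q)
  rw [← this, hgz, LinearMap.comp_zero]

end KeyLemmas

section BuildRes

variable (B)

/-- A bundled finitely generated `B`-module. -/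
structure FGB where
  carrier : Type u
  [acg : AddCommGroup carrier]
  [mod : Module B carrier]
  [fin : Module.Finite B carrier]

attribute [instance] FGB.acg FGB.mod FGB.fin

variable {B}

/-- Number of chosen generators. -/
noncomputable def covm (N : FGB B) : ℕ :=
  (Module.Finite.exists_fin (R := B) (M := N.carrier)).choose

/-- Chosen generators. -/
noncomputable def covgen (N : FGB B) : Fin (covm N) → N.carrier :=
  (Module.Finite.exists_fin (R := B) (M := N.carrier)).choose_spec.choose

theorem covgen_span (N : FGB B) : Submodule.span B (Set.range (covgen N)) = ⊤ :=
  (Module.Finite.exists_fin (R := B) (M := N.carrier)).choose_spec.choose_spec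

/-- The canonical surjection from a finite free module. -/
noncomputable def covφ (N : FGB B) : (Fin (covm N) →₀ B) →ₗ[B] N.carrier :=
  Finsupp.linearCombination B (covgen N)

theorem covφ_range (N : FGB B) : LinearMap.range (covφ N) = ⊤ := by
  rw [covφ, Finsupp.range_linearCombination, covgen_span]

theorem covφ_surj (N : FGB B) : Function.Surjective (covφ N) :=
  LinearMap.range_eq_top.mp (covφ_range N)

variable [IsNoetherianRing B]

/-- Step of the resolution: pass to the kernel of the canonical surjection. -/
noncomputable def nxt (N : FGB B) : FGB B :=
  haveI : Module.Finite B ↥(LinearMap.ker (covφ N)) :=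
    Module.Finite.iff_fg.mpr (IsNoetherian.noetherian _)
  FGB.mk ↥(LinearMap.ker (covφ N))

/-- Tower of iterated kernels. -/
noncomputable def tower (N0 : FGB B) : ℕ → FGB B
  | 0 => N0
  | (k+1) => nxt (tower N0 k)

/-- A free resolution by finitely generated free modules of a finitely generated module
over a noetherian ring. -/
noncomputable def RES (N0 : FGB B) : ProjRes B N0.carrier where
  P k := Fin (covm (tower N0 k)) →₀ B
  proj _ := inferInstance
  d k := (LinearMap.ker (covφ (tower N0 k))).subtype ∘ₗ covφ (tower N0 (k+1))
  π := covφ (tower N0 0)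
  surj := covφ_surj _
  exact_at_zero := by
    intro y
    constructor
    · intro hy
      obtain ⟨x, hx⟩ := covφ_surj (tower N0 1)
        (⟨y, hy⟩ : ↥(LinearMap.ker (covφ (tower N0 0))))
      exact ⟨x, congrArg Subtype.val hx⟩
    · rintro ⟨x, rfl⟩
      exact Subtype.property (covφ (tower N0 1) x)
  exact k := by
    intro y
    constructor
    · intro hy
      have hy' : covφ (tower N0 (k+1)) y = 0 := Subtype.ext hy
      obtain ⟨x, hx⟩ := covφ_surj (tower N0 (k+2))
        (⟨y, hy'⟩ : ↥(LinearMap.ker (covφ (tower N0 (k+1)))))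
      exact ⟨x, congrArg Subtype.val hx⟩
    · rintro ⟨x, rfl⟩
      exact congrArg Subtype.val (Subtype.property (covφ (tower N0 (k+2)) x))

theorem RES_fin (N0 : FGB B) (k : ℕ) : Module.Finite B ((RES N0).P k) := by
  show Module.Finite B (Fin (covm (tower N0 k)) →₀ B)
  infer_instance

end BuildRes

end St2Aux

end St2Aux

/-- Let `A` be a finite dimensional algebra over a field `K`, let `M` be
a finitely generated right `A`-module and `S` a simple submodule of `M` of finite grade.
Then `grade S ≤ pdim M`. -/
theorem statement_2 (K A : Type u) [Field K] [Ring A] [Algebra K A] [FiniteDimensional K A]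
    (M : Type u) [AddCommGroup M] [Module Aᵐᵒᵖ M] (hM : Module.Finite Aᵐᵒᵖ M)
    (S : Submodule Aᵐᵒᵖ M) (hS : IsSimpleModule Aᵐᵒᵖ S)
    (hgrade : gradeM Aᵐᵒᵖ S < ⊤) :
    gradeM Aᵐᵒᵖ S ≤ pdim Aᵐᵒᵖ M := by
  classical
  open St2Aux in
  refine le_sInf ?_
  rintro b ⟨n, ⟨R, hR⟩, rfl⟩
  by_contra hlt
  -- low-degree Ext vanishing against `Aᵐᵒᵖ` (for all resolutions of `S`)
  have hExtLe : ∀ i : ℕ, i ≤ n → ¬ ExtRegNonzero Aᵐᵒᵖ (↥S) i := by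
    intro i hi hreg
    exact hlt (le_trans (sInf_le ⟨i, hreg, rfl⟩) (show (i:ℕ∞) ≤ (n:ℕ∞) from Nat.cast_le.mpr hi))
  haveI : IsNoetherianRing Aᵐᵒᵖ := isNoetherian_of_tower K inferInstance
  haveI hMn : IsNoetherian Aᵐᵒᵖ M := inferInstance
  haveI : Module.Finite Aᵐᵒᵖ (↥S) := Module.Finite.iff_fg.mpr (IsNoetherian.noetherian S)
  haveI := hS
  haveI : Nontrivial (↥S) := IsSimpleModule.nontrivial Aᵐᵒᵖ (↥S)
  -- a finitely generated free resolution of `S`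
  let NS : FGB Aᵐᵒᵖ := FGB.mk (↥S)
  let RS : ProjRes Aᵐᵒᵖ (↥S) := RES NS
  have hQfin : ∀ k, Module.Finite Aᵐᵒᵖ (RS.P k) := RES_fin NS
  have hsub : ∀ i, i ≤ n → Subsingleton (ExtGrp RS Aᵐᵒᵖ i) := by
    intro i hi
    by_contra hns
    exact hExtLe i hi ⟨RS, not_subsingleton_iff_nontrivial.mp hns⟩
  -- the nonzero composite `Q 0 → S → M`
  set f₀ : RS.P 0 →ₗ[Aᵐᵒᵖ] M := S.subtype ∘ₗ RS.π with hf₀def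
  have hf₀e : f₀ ∘ₗ RS.d 0 = 0 := by
    ext x
    simp [hf₀def, RS.exact_at_zero.apply_apply_eq_zero x]
  have hf₀ : f₀ ≠ 0 := by
    intro h
    obtain ⟨s0, hs0⟩ := exists_ne (0 : ↥S)
    obtain ⟨q, hq⟩ := RS.surj s0
    have : f₀ q = (s0 : M) := by simp [hf₀def, hq]
    rw [h] at this
    exact hs0 (by simpa using (Submodule.coe_eq_zero.mp this.symm))
  -- the chain of non-coboundary cocycles along the resolution of `M`
  have chain : ∀ k : ℕ, k + 1 ≤ n →
      ∃ f : RS.P (k+1) →ₗ[Aᵐᵒᵖ] ↥(LinearMap.range (R.d k)),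
        (f ∘ₗ RS.d (k+1) = 0) ∧
        ∀ h : RS.P k →ₗ[Aᵐᵒᵖ] ↥(LinearMap.range (R.d k)), f ≠ h ∘ₗ RS.d k := by
    intro k
    induction k with
    | zero =>
      intro _
      haveI := RS.proj 0
      haveI := R.proj 0
      obtain ⟨F, hF⟩ := Module.projective_lifting_property R.π f₀ R.surj
      have hmem : ∀ x, (F ∘ₗ RS.d 0) x ∈ LinearMap.range (R.d 0) := by
        intro x
        have hπ : R.π ((F ∘ₗ RS.d 0) x) = 0 := by
          have := congrArg (fun (φ : RS.P 1 →ₗ[Aᵐᵒᵖ] M) => φ x)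
            (by rw [hF, hf₀e] : (R.π ∘ₗ F) ∘ₗ RS.d 0 = 0)
          simpa using this
        rcases (R.exact_at_zero _).mp hπ with ⟨y, hy⟩
        exact ⟨y, hy⟩
      refine ⟨LinearMap.codRestrict _ (F ∘ₗ RS.d 0) hmem, ?_, ?_⟩
      · ext x
        have h0 : RS.d 0 (RS.d 1 x) = 0 := (RS.exact 0).apply_apply_eq_zero x
        simp [LinearMap.comp_apply, LinearMap.codRestrict_apply, h0]
      · intro h heq
        set G : RS.P 0 →ₗ[Aᵐᵒᵖ] R.P 0 :=
          F - (LinearMap.range (R.d 0)).subtype ∘ₗ h with hGdef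
        have hGe : G ∘ₗ RS.d 0 = 0 := by
          ext x
          have := congrArg (fun (φ : RS.P 1 →ₗ[Aᵐᵒᵖ] ↥(LinearMap.range (R.d 0))) =>
            ((φ x : ↥(LinearMap.range (R.d 0))) : R.P 0)) heq
          simp only [LinearMap.comp_apply, LinearMap.codRestrict_apply] at this
          simp [hGdef, LinearMap.sub_apply, LinearMap.comp_apply, this]
        have hG0 : G = 0 :=
          key0 (RS.d 0) (cocycle_zero RS (hsub 0 (Nat.zero_le n))) (R.proj 0) G hGe
        have hFh : F = (LinearMap.range (R.d 0)).subtype ∘ₗ h := by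
          have := sub_eq_zero.mp (hGdef ▸ hG0)
          exact this
        apply hf₀
        rw [← hF, hFh, ← LinearMap.comp_assoc]
        ext x
        have hx : ((h x : ↥(LinearMap.range (R.d 0))) : R.P 0) ∈ LinearMap.range (R.d 0) :=
          SetLike.coe_mem _
        rcases hx with ⟨y, hy⟩
        have : R.π ((h x : ↥(LinearMap.range (R.d 0))) : R.P 0) = 0 := by
          rw [← hy]; exact R.exact_at_zero.apply_apply_eq_zero y
        simpa [LinearMap.comp_apply] using this
    | succ k ih =>
      intro hk
      obtain ⟨f, hcoc, hncob⟩ := ih (by omega)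
      haveI := RS.proj (k+1)
      haveI := R.proj (k+1)
      obtain ⟨F, hF⟩ := Module.projective_lifting_property
        (R.d k).rangeRestrict f (LinearMap.surjective_rangeRestrict _)
      have hdF : ∀ x, R.d k (F (RS.d (k+1) x)) = 0 := by
        intro x
        have h1 : (R.d k).rangeRestrict (F (RS.d (k+1) x)) = f (RS.d (k+1) x) := by
          have := congrArg (fun (φ : RS.P (k+1) →ₗ[Aᵐᵒᵖ] ↥(LinearMap.range (R.d k))) =>
            φ (RS.d (k+1) x)) hF
          exact this
        have h2 : f (RS.d (k+1) x) = 0 := by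
          have := congrArg (fun (φ : RS.P (k+2) →ₗ[Aᵐᵒᵖ] ↥(LinearMap.range (R.d k))) =>
            φ x) hcoc
          simpa using this
        have := congrArg (fun (y : ↥(LinearMap.range (R.d k))) => (y : R.P k)) (h1.trans h2)
        simpa [LinearMap.rangeRestrict] using this
      have hmem : ∀ x, (F ∘ₗ RS.d (k+1)) x ∈ LinearMap.range (R.d (k+1)) := by
        intro x
        rcases (R.exact k _).mp (hdF x) with ⟨y, hy⟩
        exact ⟨y, hy⟩
      refine ⟨LinearMap.codRestrict _ (F ∘ₗ RS.d (k+1)) hmem, ?_, ?_⟩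
      · ext x
        have h0 : RS.d (k+1) (RS.d (k+2) x) = 0 := (RS.exact (k+1)).apply_apply_eq_zero x
        simp [LinearMap.comp_apply, LinearMap.codRestrict_apply, h0]
      · intro h heq
        set G : RS.P (k+1) →ₗ[Aᵐᵒᵖ] R.P (k+1) :=
          F - (LinearMap.range (R.d (k+1))).subtype ∘ₗ h with hGdef
        have hGe : G ∘ₗ RS.d (k+1) = 0 := by
          ext x
          have := congrArg (fun (φ : RS.P (k+2) →ₗ[Aᵐᵒᵖ] ↥(LinearMap.range (R.d (k+1)))) =>
            ((φ x : ↥(LinearMap.range (R.d (k+1)))) : R.P (k+1))) heq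
          simp only [LinearMap.comp_apply, LinearMap.codRestrict_apply] at this
          simp [hGdef, LinearMap.sub_apply, LinearMap.comp_apply, this]
        obtain ⟨H, hH⟩ := key (RS.d (k+1)) (RS.d k)
          (cocycle_cobound RS (hsub (k+1) (by omega))) (hQfin (k+1)) (R.proj (k+1)) G hGe
        apply hncob ((R.d k).rangeRestrict ∘ₗ H)
        have hzero : (R.d k).rangeRestrict ∘ₗ (LinearMap.range (R.d (k+1))).subtype = 0 := by
          ext y
          rcases SetLike.coe_mem y with ⟨z, hz⟩
          have : R.d k ((y : ↥(LinearMap.range (R.d (k+1)))) : R.P (k+1)) = 0 := by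
            rw [← hz]; exact (R.exact k).apply_apply_eq_zero z
          simpa [LinearMap.rangeRestrict] using this
        calc f = (R.d k).rangeRestrict ∘ₗ F := hF.symm
          _ = (R.d k).rangeRestrict ∘ₗ (G + (LinearMap.range (R.d (k+1))).subtype ∘ₗ h) := by
              rw [hGdef]; congr 1; abel
          _ = ((R.d k).rangeRestrict ∘ₗ H) ∘ₗ RS.d k := by
              rw [LinearMap.comp_add, hH, ← LinearMap.comp_assoc, ← LinearMap.comp_assoc,
                hzero, LinearMap.zero_comp, add_zero, LinearMap.comp_assoc]
  -- endgame
  match n, hR, hExtLe, hsub, chain with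
  | 0, hR, hExtLe, hsub, chain =>
    haveI := RS.proj 0
    haveI := R.proj 0
    haveI : Subsingleton (R.P 1) := hR 1 (by norm_num)
    have hd0 : R.d 0 = 0 := by ext x; rw [Subsingleton.elim x 0, map_zero]; rfl
    have hker : LinearMap.ker R.π = ⊥ := by
      rw [LinearMap.exact_iff.mp R.exact_at_zero, hd0, LinearMap.range_zero]
    let E := LinearEquiv.ofBijective R.π ⟨LinearMap.ker_eq_bot.mp hker, R.surj⟩
    have hfe : (E.symm.toLinearMap ∘ₗ f₀) ∘ₗ RS.d 0 = 0 := by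
      rw [LinearMap.comp_assoc, hf₀e, LinearMap.comp_zero]
    have := key0 (RS.d 0) (cocycle_zero RS (hsub 0 le_rfl)) (R.proj 0)
      (E.symm.toLinearMap ∘ₗ f₀) hfe
    apply hf₀
    ext x
    have := congrArg (fun (φ : RS.P 0 →ₗ[Aᵐᵒᵖ] R.P 0) => E (φ x)) this
    simpa using this
  | (m+1), hR, hExtLe, hsub, chain =>
    obtain ⟨f, hcoc, hncob⟩ := chain m le_rfl
    haveI := RS.proj (m+1)
    haveI := R.proj (m+1)
    haveI : Subsingleton (R.P (m+2)) := hR (m+2) (by omega)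
    have hd : R.d (m+1) = 0 := by ext x; rw [Subsingleton.elim x 0, map_zero]; rfl
    have hker : LinearMap.ker ((R.d m).rangeRestrict) = ⊥ := by
      rw [LinearMap.ker_rangeRestrict, LinearMap.exact_iff.mp (R.exact m), hd,
        LinearMap.range_zero]
    let E := LinearEquiv.ofBijective ((R.d m).rangeRestrict)
      ⟨LinearMap.ker_eq_bot.mp hker, LinearMap.surjective_rangeRestrict _⟩
    have hfe : (E.symm.toLinearMap ∘ₗ f) ∘ₗ RS.d (m+1) = 0 := by
      rw [LinearMap.comp_assoc, hcoc, LinearMap.comp_zero]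
    obtain ⟨H, hH⟩ := key (RS.d (m+1)) (RS.d m)
      (cocycle_cobound RS (hsub (m+1) le_rfl)) (hQfin (m+1)) (R.proj (m+1))
      (E.symm.toLinearMap ∘ₗ f) hfe
    apply hncob (E.toLinearMap ∘ₗ H)
    ext x
    have := congrArg (fun (φ : RS.P (m+1) →ₗ[Aᵐᵒᵖ] R.P (m+1)) => E (φ x)) hH
    simpa using this
end
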